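/- Let H be a Hilbert space, (Γ, μ) a probability space, and g ↦ u_g a measurable map from Γ to isometries of H. Suppose ψ ∈ H satisfies ψ = ∫_Γ u_g ψ dμ(g) (Bochner integral). Then for μ-almost every g, u_g ψ = ψ. -/

import Mathlib

open MeasureTheory

/-- Barycenter rigidity in Hilbert spaces: if `ψ` is the `μ`-barycenter of its
images under a measurable family of isometries `u_g`, then `u_g ψ = ψ` for
`μ`-almost every `g`. -/
theorem barycenter_of_isometries
    {H : Type*} [NormedAddCommGroup H] [InnerProductSpace ℝ H] [CompleteSpace H]
    {Γ : Type*} [MeasurableSpace Γ] (μ : Measure Γ) [IsProbabilityMeasure μ]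
    (u : Γ → H →ₗᵢ[ℝ] H) (ψ : H)
    (hmeas : Integrable (fun g => u g ψ) μ)
    (hbary : ψ = ∫ g, u g ψ ∂μ) :
    ∀ᵐ g ∂μ, u g ψ = ψ := by
  set f : Γ → ℝ := fun g => inner ℝ ψ (u g ψ) with hf
  have hfint : Integrable f μ := hmeas.const_inner ψ
  have hint : ∫ g, f g ∂μ = ‖ψ‖ ^ 2 := by
    rw [hf]
    rw [integral_inner hmeas, ← hbary, real_inner_self_eq_norm_sq]
  have hle : ∀ g, f g ≤ ‖ψ‖ ^ 2 := by
    intro g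
    calc f g ≤ ‖ψ‖ * ‖u g ψ‖ := real_inner_le_norm _ _
    _ = ‖ψ‖ ^ 2 := by rw [(u g).norm_map]; ring
  have hgint : Integrable (fun g => ‖ψ‖ ^ 2 - f g) μ := (integrable_const _).sub hfint
  have hzero : ∫ g, (‖ψ‖ ^ 2 - f g) ∂μ = 0 := by
    rw [integral_sub (integrable_const _) hfint, hint, integral_const]
    simp
  have hae : (fun g => ‖ψ‖ ^ 2 - f g) =ᵐ[μ] 0 := by
    rw [← integral_eq_zero_iff_of_nonneg_ae ?_ hgint]
    · exact hzero
    · exact Filter.Eventually.of_forall fun g => sub_nonneg.mpr (hle g)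
  filter_upwards [hae] with g hg
  have hfg : f g = ‖ψ‖ ^ 2 := by
    have : ‖ψ‖ ^ 2 - f g = 0 := hg
    linarith
  have : ‖u g ψ - ψ‖ ^ 2 = 0 := by
    rw [← real_inner_self_eq_norm_sq, inner_sub_sub_self]
    have h1 : inner ℝ (u g ψ) (u g ψ) = (‖ψ‖ ^ 2 : ℝ) := by
      rw [real_inner_self_eq_norm_sq, (u g).norm_map]
    have h2 : inner ℝ (u g ψ) ψ = (‖ψ‖ ^ 2 : ℝ) := by
      rw [real_inner_comm]; exact hfg
    have h3 : inner ℝ ψ (u g ψ) = (‖ψ‖ ^ 2 : ℝ) := hfg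
    have h4 : inner ℝ ψ ψ = (‖ψ‖ ^ 2 : ℝ) := real_inner_self_eq_norm_sq ψ
    rw [h1, h2, h3, h4]; ring
  have := pow_eq_zero_iff (n := 2) (by norm_num) |>.mp this
  rwa [norm_eq_zero, sub_eq_zero] at this
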